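/- In the frequency-domain model of an LCMT, let i, j, k be nodes such that k is a descendant of j, i is not a descendant of j, and i ≠ j. Then C(X i ω, X k ω) ≤ C(X i ω, X j ω) for every ω ∈ ℝ. If, in addition, h m ω ≠ 0 for every node m ≠ r and every ω, then the inequality is strict for every ω; consequently, if the coherence functions ω ↦ C(X i ω, X j ω) and ω ↦ C(X i ω, X k ω) are measurable, d(i, j) < d(i, k). -/

import Mathlib

open scoped InnerProductSpace

/-- The coherence of two vectors of a complex inner product space
(inner product conjugate-linear in the first argument):
`C(u, v) = ‖⟪u, v⟫‖² / (‖u‖² · ‖v‖²)`. -/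
noncomputable def coherence {H : Type*} [NormedAddCommGroup H]
    [InnerProductSpace ℂ H] (u v : H) : ℝ :=
  ‖⟪u, v⟫_ℂ‖ ^ 2 / (‖u‖ ^ 2 * ‖v‖ ^ 2)

/-- The coherence-based distance between two frequency-indexed families of
vectors: `d(f, g) = ( (1/(2π)) ∫_{-π}^{π} (1 − C(f ω, g ω)) dω )^{1/2}`. -/
noncomputable def cohDist {H : Type*} [NormedAddCommGroup H]
    [InnerProductSpace ℂ H] (f g : ℝ → H) : ℝ :=
  Real.sqrt ((1 / (2 * Real.pi)) *
    ∫ ω in (-Real.pi)..Real.pi, (1 - coherence (f ω) (g ω)))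

section LcmtHelpers

variable {H : Type*} [NormedAddCommGroup H] [InnerProductSpace ℂ H]
variable {V : Type*}

/-- Any periodic point of `par` is the root. -/
lemma lcmt_period {r : V} {par : V → V} (hroot : par r = r)
    (hreach : ∀ j, ∃ n, par^[n] j = r) :
    ∀ x p, 1 ≤ p → par^[p] x = x → x = r := by
  intro x p hp hx
  obtain ⟨N, hN⟩ := hreach x
  have hq : ∀ q : ℕ, par^[q * p] x = x := by
    intro q
    induction q with
    | zero => simp
    | succ q ih => rw [Nat.succ_mul, Function.iterate_add_apply, hx, ih]
  have hle : N ≤ N * p := Nat.le_mul_of_pos_right N hp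
  have h1 : par^[(N * p - N) + N] x = r := by
    rw [Function.iterate_add_apply, hN, Function.iterate_fixed hroot]
  rw [Nat.sub_add_cancel hle, hq N] at h1
  exact h1

/-- Noises of non-ancestors are orthogonal to a signal. -/
lemma lcmt_orth {r : V} {par : V → V} {h : V → ℝ → ℂ} {ρ : V → ℝ → H} {X : V → ℝ → H}
    (horth : ∀ (ω : ℝ) (a b : V), a ≠ b → ⟪ρ a ω, ρ b ω⟫_ℂ = 0)
    (hXr : ∀ ω, X r ω = ρ r ω)
    (hX : ∀ j, j ≠ r → ∀ ω, X j ω = h j ω • X (par j) ω + ρ j ω) :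
    ∀ (n : ℕ) (m : V), par^[n] m = r → ∀ (ω : ℝ) (a : V),
      (∀ t, par^[t] m ≠ a) → ⟪ρ a ω, X m ω⟫_ℂ = 0 := by
  intro n
  induction n with
  | zero =>
    intro m hm ω a ha
    simp only [Function.iterate_zero_apply] at hm
    subst hm
    rw [hXr]
    exact horth ω a m (fun e => ha 0 (by simpa using e.symm))
  | succ n ih =>
    intro m hm ω a ha
    by_cases hmr : m = r
    · subst hmr
      rw [hXr]
      exact horth ω a m (fun e => ha 0 (by simpa using e.symm))
    · rw [hX m hmr ω, inner_add_right, inner_smul_right]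
      have h1 := ih (par m) (by rw [← Function.iterate_succ_apply]; exact hm) ω a
        (fun t => by rw [← Function.iterate_succ_apply]; exact ha (t + 1))
      rw [h1, horth ω a m (fun e => ha 0 (by simpa using e.symm))]
      ring

/-- The norm of a signal dominates the norm of its own noise. -/
lemma lcmt_norm {r : V} {par : V → V} {h : V → ℝ → ℂ} {ρ : V → ℝ → H} {X : V → ℝ → H}
    (hroot : par r = r)
    (hreach : ∀ j, ∃ n, par^[n] j = r)
    (horth : ∀ (ω : ℝ) (a b : V), a ≠ b → ⟪ρ a ω, ρ b ω⟫_ℂ = 0)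
    (hXr : ∀ ω, X r ω = ρ r ω)
    (hX : ∀ j, j ≠ r → ∀ ω, X j ω = h j ω • X (par j) ω + ρ j ω) :
    ∀ (m : V) (ω : ℝ), ‖ρ m ω‖ ≤ ‖X m ω‖ := by
  intro m ω
  by_cases hmr : m = r
  · subst hmr; rw [hXr]
  · rw [hX m hmr ω]
    obtain ⟨N, hN⟩ := hreach (par m)
    have horthX : ⟪ρ m ω, X (par m) ω⟫_ℂ = 0 := by
      refine lcmt_orth horth hXr hX N (par m) hN ω m (fun t e => ?_)
      have ht1 : par^[t + 1] m = m := by rw [Function.iterate_succ_apply]; exact e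
      exact hmr (lcmt_period hroot hreach m (t + 1) (by omega) ht1)
    have hz : ⟪h m ω • X (par m) ω, ρ m ω⟫_ℂ = 0 := by
      rw [inner_smul_left, ← inner_conj_symm, horthX]
      simp
    have hsq := norm_add_sq_eq_norm_sq_add_norm_sq_of_inner_eq_zero _ _ hz
    nlinarith [norm_nonneg (h m ω • X (par m) ω), norm_nonneg (ρ m ω),
      norm_nonneg (h m ω • X (par m) ω + ρ m ω)]

/-- Decomposition of a signal along the chain to an ancestor. -/
lemma lcmt_decomp {r : V} {par : V → V} {h : V → ℝ → ℂ} {ρ : V → ℝ → H} {X : V → ℝ → H}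
    (hroot : par r = r)
    (hreach : ∀ j, ∃ n, par^[n] j = r)
    (horth : ∀ (ω : ℝ) (a b : V), a ≠ b → ⟪ρ a ω, ρ b ω⟫_ℂ = 0)
    (hXr : ∀ ω, X r ω = ρ r ω)
    (hX : ∀ j, j ≠ r → ∀ ω, X j ω = h j ω • X (par j) ω + ρ j ω) :
    ∀ (n : ℕ) (d m : V) (ω : ℝ), par^[n] d = m → (∀ t, t < n → par^[t] d ≠ m) →
      ∃ w : H, X d ω = (∏ t ∈ Finset.range n, h (par^[t] d) ω) • X m ω + w ∧
        (∀ u : H, (∀ t, t < n → ⟪ρ (par^[t] d) ω, u⟫_ℂ = 0) → ⟪w, u⟫_ℂ = 0) ∧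
        (n = 0 → w = 0) ∧ (1 ≤ n → ‖ρ d ω‖ ≤ ‖w‖) := by
  intro n
  induction n with
  | zero =>
    intro d m ω hdm _
    simp only [Function.iterate_zero_apply] at hdm
    subst hdm
    exact ⟨0, by simp, fun u _ => inner_zero_left u, fun _ => rfl, by omega⟩
  | succ n ih =>
    intro d m ω hdm hmin
    have hdr : d ≠ r := by
      intro e
      refine hmin 0 (Nat.succ_pos n) ?_
      have hm : m = r := by
        rw [← hdm, e, Function.iterate_fixed hroot]
      simp [e, hm]
    have hpm : par^[n] (par d) = m := by rw [← Function.iterate_succ_apply]; exact hdm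
    have hpmin : ∀ t, t < n → par^[t] (par d) ≠ m := fun t ht => by
      rw [← Function.iterate_succ_apply]; exact hmin (t + 1) (by omega)
    obtain ⟨w', hw'eq, hw'orth, -, -⟩ := ih (par d) m ω hpm hpmin
    have hprod : (∏ t ∈ Finset.range (n + 1), h (par^[t] d) ω)
        = h d ω * ∏ t ∈ Finset.range n, h (par^[t] (par d)) ω := by
      rw [Finset.prod_range_succ', Function.iterate_zero_apply, mul_comm]
      rfl
    refine ⟨h d ω • w' + ρ d ω, ?_, ?_, by omega, ?_⟩
    · rw [hX d hdr ω, hw'eq, hprod]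
      module
    · intro u hu
      have h1 : ⟪w', u⟫_ℂ = 0 := hw'orth u (fun t ht => by
        rw [← Function.iterate_succ_apply]; exact hu (t + 1) (by omega))
      have h2 : ⟪ρ d ω, u⟫_ℂ = 0 := by
        have := hu 0 (by omega)
        simpa using this
      rw [inner_add_left, inner_smul_left, h1, h2]
      ring
    · intro _
      have hwρ : ⟪w', ρ d ω⟫_ℂ = 0 := by
        refine hw'orth (ρ d ω) (fun t ht => horth ω (par^[t] (par d)) d (fun e => ?_))
        refine hdr (lcmt_period hroot hreach d (t + 1) (by omega) ?_)
        rw [Function.iterate_succ_apply]; exact e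
      have hz : ⟪h d ω • w', ρ d ω⟫_ℂ = 0 := by
        rw [inner_smul_left, hwρ, mul_zero]
      have hsq := norm_add_sq_eq_norm_sq_add_norm_sq_of_inner_eq_zero _ _ hz
      nlinarith [norm_nonneg (h d ω • w'), norm_nonneg (ρ d ω),
        norm_nonneg (h d ω • w' + ρ d ω)]

end LcmtHelpers

/-- Lemma 2 of the paper, the 'cousins' lemma: if `k` is a
descendant of `j` and `i` is neither `j` nor a descendant of `j`, then the
coherence of `X i` with `X k` never exceeds that with `X j`; under the
nondegeneracy assumption that no transfer function vanishes, the inequality is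
strict at every frequency, and consequently (given measurability of the
coherence functions) `d(i, j) < d(i, k)`. -/
theorem lcmt_cousins_lemma
    {H : Type*} [NormedAddCommGroup H] [InnerProductSpace ℂ H]
    {V : Type*} [Fintype V]
    (r : V) (par : V → V)
    (hroot : par r = r)
    (hpar : ∀ j, j ≠ r → par j ≠ j)
    (hreach : ∀ j, ∃ n, par^[n] j = r)
    (h : V → ℝ → ℂ) (ρ : V → ℝ → H)
    (horth : ∀ (ω : ℝ) (a b : V), a ≠ b → ⟪ρ a ω, ρ b ω⟫_ℂ = 0)
    (hwp : ∀ (j : V) (ω : ℝ), ρ j ω ≠ 0)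
    (X : V → ℝ → H)
    (hXr : ∀ ω, X r ω = ρ r ω)
    (hX : ∀ j, j ≠ r → ∀ ω, X j ω = h j ω • X (par j) ω + ρ j ω)
    (i j k : V)
    (hkj : ∃ n, 1 ≤ n ∧ par^[n] k = j)
    (hij : ¬ ∃ n, 1 ≤ n ∧ par^[n] i = j)
    (hne : i ≠ j) :
    (∀ ω : ℝ, coherence (X i ω) (X k ω) ≤ coherence (X i ω) (X j ω)) ∧
    ((∀ (m : V) (ω : ℝ), m ≠ r → h m ω ≠ 0) →
      (∀ ω : ℝ, coherence (X i ω) (X k ω) < coherence (X i ω) (X j ω)) ∧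
      ((Measurable fun ω => coherence (X i ω) (X j ω)) →
       (Measurable fun ω => coherence (X i ω) (X k ω)) →
        cohDist (X i) (X j) < cohDist (X i) (X k))) := by
  classical
  have hper := lcmt_period hroot hreach
  have horthL := lcmt_orth horth hXr hX
  have hnormL := lcmt_norm hroot hreach horth hXr hX
  have hdecomp := lcmt_decomp hroot hreach horth hXr hX
  -- `j` is not the root
  have hjr : j ≠ r := by
    intro e
    obtain ⟨N, hN⟩ := hreach i
    rcases Nat.eq_zero_or_pos N with rfl | h1
    · simp only [Function.iterate_zero_apply] at hN
      exact hne (hN.trans e.symm)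
    · exact hij ⟨N, h1, by rw [hN, e]⟩
  -- minimal chain from `k` to `j`
  obtain ⟨n, hn1, hn2, hmin⟩ : ∃ n, 1 ≤ n ∧ par^[n] k = j ∧ ∀ t, t < n → par^[t] k ≠ j := by
    refine ⟨Nat.find hkj, (Nat.find_spec hkj).1, (Nat.find_spec hkj).2, ?_⟩
    intro t ht e
    rcases Nat.eq_zero_or_pos t with rfl | h1
    · simp only [Function.iterate_zero_apply] at e
      subst e
      exact hjr (hper k (Nat.find hkj) (Nat.find_spec hkj).1 (Nat.find_spec hkj).2)
    · exact Nat.find_min hkj ht ⟨h1, e⟩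
  -- nodes on the chain are not the root
  have hkr : ∀ t, t < n → par^[t] k ≠ r := by
    intro t ht e
    apply hjr
    have h1 : par^[(n - t) + t] k = r := by
      rw [Function.iterate_add_apply, e, Function.iterate_fixed hroot]
    rw [Nat.sub_add_cancel (le_of_lt ht), hn2] at h1
    exact h1
  -- orthogonality of chain noises to `X i` and `X j`
  have hOi : ∀ (ω : ℝ) (t : ℕ), t < n → ⟪ρ (par^[t] k) ω, X i ω⟫_ℂ = 0 := by
    intro ω t ht
    obtain ⟨Ni, hNi⟩ := hreach i
    refine horthL Ni i hNi ω _ (fun s e => ?_)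
    refine hij ⟨(n - t) + s, by omega, ?_⟩
    rw [Function.iterate_add_apply, e, ← Function.iterate_add_apply,
      Nat.sub_add_cancel (le_of_lt ht), hn2]
  have hOj : ∀ (ω : ℝ) (t : ℕ), t < n → ⟪ρ (par^[t] k) ω, X j ω⟫_ℂ = 0 := by
    intro ω t ht
    obtain ⟨Nj, hNj⟩ := hreach j
    refine horthL Nj j hNj ω _ (fun s e => ?_)
    have hper' : par^[(n - t) + s] j = j := by
      rw [Function.iterate_add_apply, e, ← Function.iterate_add_apply,
        Nat.sub_add_cancel (le_of_lt ht), hn2]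
    exact hjr (hper j _ (by omega) hper')
  have hXipos : ∀ ω, 0 < ‖X i ω‖ :=
    fun ω => lt_of_lt_of_le (norm_pos_iff.2 (hwp i ω)) (hnormL i ω)
  have hXjpos : ∀ ω, 0 < ‖X j ω‖ :=
    fun ω => lt_of_lt_of_le (norm_pos_iff.2 (hwp j ω)) (hnormL j ω)
  -- the meet of `i` and `j`
  have hex : ∃ t, ∃ s : ℕ, par^[s] j = par^[t] i := by
    obtain ⟨Ni, hNi⟩ := hreach i
    obtain ⟨Nj, hNj⟩ := hreach j
    exact ⟨Ni, Nj, by rw [hNi, hNj]⟩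
  obtain ⟨t₀, hexs, hmint'⟩ : ∃ t₀, (∃ s, par^[s] j = par^[t₀] i) ∧
      (∀ t, t < t₀ → ∀ s, par^[s] j ≠ par^[t] i) :=
    ⟨Nat.find hex, Nat.find_spec hex, fun t ht s e => Nat.find_min hex ht ⟨s, e⟩⟩
  obtain ⟨s₀, hs₀, hmins⟩ : ∃ s₀, par^[s₀] j = par^[t₀] i ∧
      ∀ s, s < s₀ → par^[s] j ≠ par^[t₀] i :=
    ⟨Nat.find hexs, Nat.find_spec hexs, fun s hs => Nat.find_min hexs hs⟩
  have hmint : ∀ t, t < t₀ → par^[t] i ≠ par^[t₀] i :=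
    fun t ht e => hmint' t ht s₀ (hs₀.trans e.symm)
  -- nonvanishing of the inner product of `X i` and `X j` (nondegenerate case)
  have hNzero : (∀ (m : V) (ω : ℝ), m ≠ r → h m ω ≠ 0) →
      ∀ ω, ⟪X i ω, X j ω⟫_ℂ ≠ 0 := by
    intro hnd ω
    have hir : ∀ t, t < t₀ → par^[t] i ≠ r := by
      intro t ht e
      obtain ⟨Nj, hNj⟩ := hreach j
      exact hmint' t ht Nj (by rw [hNj, e])
    have hjrc : ∀ s, s < s₀ → par^[s] j ≠ r := by
      intro s hs e
      apply hmins s hs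
      have h1 : par^[(s₀ - s) + s] j = par^[t₀] i := by
        rw [Nat.sub_add_cancel (le_of_lt hs)]; exact hs₀
      rw [Function.iterate_add_apply, e, Function.iterate_fixed hroot] at h1
      rw [e, ← h1]
    obtain ⟨wi, heqi, horthi, -, -⟩ := hdecomp t₀ i (par^[t₀] i) ω rfl hmint
    obtain ⟨wj, heqj, horthj, -, -⟩ := hdecomp s₀ j (par^[t₀] i) ω hs₀ hmins
    obtain ⟨Nm, hNm⟩ := hreach (par^[t₀] i)
    have hwiXm : ⟪wi, X (par^[t₀] i) ω⟫_ℂ = 0 := by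
      refine horthi _ (fun t ht => horthL Nm _ hNm ω _ (fun s' e => ?_))
      refine hmint' t ht (s' + s₀) ?_
      rw [Function.iterate_add_apply, hs₀, e]
    have hwjXm : ⟪wj, X (par^[t₀] i) ω⟫_ℂ = 0 := by
      refine horthj _ (fun s hs => horthL Nm _ hNm ω _ (fun s' e => ?_))
      have hmr : par^[t₀] i = r := by
        refine hper _ ((s₀ - s) + s') (by omega) ?_
        rw [Function.iterate_add_apply, e, ← Function.iterate_add_apply,
          Nat.sub_add_cancel (le_of_lt hs), hs₀]
      apply hmins s hs
      rw [← e, hmr]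
      exact Function.iterate_fixed hroot s'
    have hXmwj : ⟪X (par^[t₀] i) ω, wj⟫_ℂ = 0 := by
      rw [← inner_conj_symm, hwjXm, map_zero]
    have hwiwj : ⟪wi, wj⟫_ℂ = 0 := by
      refine horthi wj (fun t ht => ?_)
      rw [← inner_conj_symm,
        horthj (ρ (par^[t] i) ω) (fun s hs => horth ω _ _ (fun e => hmint' t ht s e)),
        map_zero]
    have hγ : (∏ t ∈ Finset.range t₀, h (par^[t] i) ω) ≠ 0 :=
      Finset.prod_ne_zero_iff.2 (fun t ht => hnd _ ω (hir t (Finset.mem_range.1 ht)))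
    have hβ : (∏ s ∈ Finset.range s₀, h (par^[s] j) ω) ≠ 0 :=
      Finset.prod_ne_zero_iff.2 (fun s hs => hnd _ ω (hjrc s (Finset.mem_range.1 hs)))
    have hXm0 : X (par^[t₀] i) ω ≠ 0 := by
      intro e
      have h1 := hnormL (par^[t₀] i) ω
      rw [e, norm_zero] at h1
      exact hwp (par^[t₀] i) ω (norm_le_zero_iff.1 h1)
    have hcalc : ⟪X i ω, X j ω⟫_ℂ
        = (starRingEnd ℂ) (∏ t ∈ Finset.range t₀, h (par^[t] i) ω)
          * ((∏ s ∈ Finset.range s₀, h (par^[s] j) ω)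
            * ⟪X (par^[t₀] i) ω, X (par^[t₀] i) ω⟫_ℂ) := by
      rw [heqi, heqj]
      simp only [inner_add_left, inner_add_right, inner_smul_left, inner_smul_right,
        hwiwj, hwiXm, hXmwj, mul_zero, add_zero, zero_add]
      ring
    rw [hcalc]
    have hγ' : (starRingEnd ℂ) (∏ t ∈ Finset.range t₀, h (par^[t] i) ω) ≠ 0 :=
      fun e => hγ (by simpa using congrArg (starRingEnd ℂ) e)
    exact mul_ne_zero hγ' (mul_ne_zero hβ (inner_self_ne_zero.2 hXm0))
  -- pointwise inequalities
  have keyineq : ∀ ω : ℝ, coherence (X i ω) (X k ω) ≤ coherence (X i ω) (X j ω)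
      ∧ ((∀ (m : V) (ω' : ℝ), m ≠ r → h m ω' ≠ 0) →
        coherence (X i ω) (X k ω) < coherence (X i ω) (X j ω)) := by
    intro ω
    obtain ⟨wk, heq, horthc, -, hwnorm⟩ := hdecomp n k j ω hn2 hmin
    have hiw : ⟪X i ω, wk⟫_ℂ = 0 := by
      rw [← inner_conj_symm, horthc _ (fun t ht => hOi ω t ht), map_zero]
    have hjw : ⟪(∏ t ∈ Finset.range n, h (par^[t] k) ω) • X j ω, wk⟫_ℂ = 0 := by
      rw [inner_smul_left, ← inner_conj_symm, horthc _ (fun t ht => hOj ω t ht),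
        map_zero, mul_zero]
    have hin : ⟪X i ω, X k ω⟫_ℂ
        = (∏ t ∈ Finset.range n, h (par^[t] k) ω) * ⟪X i ω, X j ω⟫_ℂ := by
      rw [heq, inner_add_right, inner_smul_right, hiw, add_zero]
    have hnk : ‖X k ω‖ ^ 2
        = ‖∏ t ∈ Finset.range n, h (par^[t] k) ω‖ ^ 2 * ‖X j ω‖ ^ 2 + ‖wk‖ ^ 2 := by
      have hsq := norm_add_sq_eq_norm_sq_add_norm_sq_of_inner_eq_zero _ _ hjw
      rw [heq, pow_two, hsq, norm_smul]
      ring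
    have hW : 0 < ‖wk‖ ^ 2 := by
      have h1 : 0 < ‖ρ k ω‖ := norm_pos_iff.2 (hwp k ω)
      have h2 := hwnorm hn1
      nlinarith
    have hU : 0 < ‖X i ω‖ ^ 2 := pow_pos (hXipos ω) 2
    have hVj : 0 < ‖X j ω‖ ^ 2 := pow_pos (hXjpos ω) 2
    have hNge : (0:ℝ) ≤ ‖⟪X i ω, X j ω⟫_ℂ‖ ^ 2 := by positivity
    have hAge : (0:ℝ) ≤ ‖∏ t ∈ Finset.range n, h (par^[t] k) ω‖ ^ 2 := by positivity
    constructor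
    · unfold coherence
      rw [hin, hnk, norm_mul, mul_pow,
        div_le_div_iff₀ (mul_pos hU (by nlinarith [mul_nonneg hAge hVj.le]))
          (mul_pos hU hVj)]
      nlinarith [mul_nonneg (mul_nonneg hNge hU.le) hW.le]
    · intro hnd
      have hN : (0:ℝ) < ‖⟪X i ω, X j ω⟫_ℂ‖ ^ 2 := by
        exact pow_pos (norm_pos_iff.2 (hNzero hnd ω)) 2
      have hA : (0:ℝ) < ‖∏ t ∈ Finset.range n, h (par^[t] k) ω‖ ^ 2 := by
        have h1 : (∏ t ∈ Finset.range n, h (par^[t] k) ω) ≠ 0 :=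
          Finset.prod_ne_zero_iff.2 (fun t ht => hnd _ ω (hkr t (Finset.mem_range.1 ht)))
        exact pow_pos (norm_pos_iff.2 h1) 2
      unfold coherence
      rw [hin, hnk, norm_mul, mul_pow,
        div_lt_div_iff₀ (mul_pos hU (by nlinarith [mul_nonneg hAge hVj.le]))
          (mul_pos hU hVj)]
      nlinarith [mul_pos (mul_pos hN hU) hW]
  refine ⟨fun ω => (keyineq ω).1, fun hnd => ⟨fun ω => (keyineq ω).2 hnd, fun hmJ hmK => ?_⟩⟩
  -- the integral comparison
  have hpi : (0:ℝ) < Real.pi := Real.pi_pos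
  have hCnn : ∀ (u v : H), 0 ≤ coherence u v := fun u v => by unfold coherence; positivity
  have hCle1 : ∀ (u v : H), coherence u v ≤ 1 := by
    intro u v
    unfold coherence
    rcases eq_or_lt_of_le (by positivity : (0:ℝ) ≤ ‖u‖ ^ 2 * ‖v‖ ^ 2) with h0 | h0
    · rw [← h0, div_zero]; norm_num
    · rw [div_le_one h0]
      have h1 := norm_inner_le_norm (𝕜 := ℂ) u v
      nlinarith [norm_nonneg u, norm_nonneg v, norm_nonneg (⟪u, v⟫_ℂ)]
  have hFint : IntervalIntegrable (fun ω => 1 - coherence (X i ω) (X j ω))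
      MeasureTheory.volume (-Real.pi) Real.pi := by
    rw [intervalIntegrable_iff_integrableOn_Ioc_of_le (by linarith)]
    refine MeasureTheory.Integrable.mono' (g := fun _ => (1:ℝ))
      (MeasureTheory.integrableOn_const measure_Ioc_lt_top.ne)
      ((measurable_const.sub hmJ).aestronglyMeasurable)
      (MeasureTheory.ae_of_all _ (fun x => ?_))
    show ‖1 - coherence (X i x) (X j x)‖ ≤ 1
    rw [Real.norm_eq_abs, abs_le]
    constructor
    · have := hCle1 (X i x) (X j x); linarith
    · have := hCnn (X i x) (X j x); linarith
  have hGint : IntervalIntegrable (fun ω => 1 - coherence (X i ω) (X k ω))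
      MeasureTheory.volume (-Real.pi) Real.pi := by
    rw [intervalIntegrable_iff_integrableOn_Ioc_of_le (by linarith)]
    refine MeasureTheory.Integrable.mono' (g := fun _ => (1:ℝ))
      (MeasureTheory.integrableOn_const measure_Ioc_lt_top.ne)
      ((measurable_const.sub hmK).aestronglyMeasurable)
      (MeasureTheory.ae_of_all _ (fun x => ?_))
    show ‖1 - coherence (X i x) (X k x)‖ ≤ 1
    rw [Real.norm_eq_abs, abs_le]
    constructor
    · have := hCle1 (X i x) (X k x); linarith
    · have := hCnn (X i x) (X k x); linarith
  have hposint : 0 < ∫ x in (-Real.pi)..Real.pi,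
      ((1 - coherence (X i x) (X k x)) - (1 - coherence (X i x) (X j x))) := by
    refine intervalIntegral.intervalIntegral_pos_of_pos_on (hGint.sub hFint) (fun x _ => ?_) (by linarith)
    have := (keyineq x).2 hnd
    linarith
  rw [intervalIntegral.integral_sub hGint hFint] at hposint
  unfold cohDist
  apply Real.sqrt_lt_sqrt
  · refine mul_nonneg (by positivity) ?_
    refine intervalIntegral.integral_nonneg (by linarith) (fun u _ => ?_)
    have := hCle1 (X i u) (X j u)
    linarith
  · have h2π : (0:ℝ) < 1 / (2 * Real.pi) := by positivity
    have := mul_lt_mul_of_pos_left (by linarith :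
      (∫ ω in (-Real.pi)..Real.pi, (1 - coherence (X i ω) (X j ω))) <
      (∫ ω in (-Real.pi)..Real.pi, (1 - coherence (X i ω) (X k ω)))) h2π
    exact this
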